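/- Let f be a Schwartz function on ℝⁿ and define h(x) := (x₁² ⋯ xₙ²) f(x), which is again Schwartz. Then F_h(α) = b(α−μ₀) F_f(α+1) for all α ∈ ℂ, where b(z) := ∏_{j=1}^n (z + k(j−1)). (Equivalently, Δ(x²)·ζ_α = b(α−μ₀) ζ_{α+1} as tempered distributions.) -/

import Mathlib

noncomputable section

open MeasureTheory Real

/-- The type-A weight `ω^A(x) = ∏_{i<j} |x_i - x_j|^{2k}`. -/
def weightA (n : ℕ) (k : ℝ) (x : Fin n → ℝ) : ℝ :=
  ∏ i : Fin n, ∏ j ∈ Finset.Ioi i, |x i - x j| ^ (2 * k)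

/-- The generalized gamma function
`Γ_n(α) = c_A (2π)^{-n/2} ∏_{j=1}^n Γ(α - k(j-1))`, with
`c_A = ∫_{ℝⁿ} e^{-|x|²/2} ω^A(x) dx`. -/
def GammaN (n : ℕ) (k : ℝ) (α : ℂ) : ℂ :=
  ((∫ x : Fin n → ℝ, Real.exp (-(∑ i, x i ^ 2) / 2) * weightA n k x : ℝ) : ℂ) *
    ((2 * π : ℝ) : ℂ) ^ (-(n : ℂ) / 2) *
    ∏ j : Fin n, Complex.Gamma (α - (k : ℂ) * (j : ℕ))

/-- The zeta integral `𝒵(f;α)`. -/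
def zetaIntegral (n : ℕ) (k μ₀ : ℝ)
    (f : SchwartzMap (Fin n → ℝ) ℂ) (α : ℂ) : ℂ :=
  ∫ x : Fin n → ℝ, f x *
    ((∏ i, ((|x i| : ℝ) : ℂ) ^ (2 * α - 2 * (μ₀ : ℂ) - 1)) *
      ((∏ i : Fin n, ∏ j ∈ Finset.Ioi i, |x i ^ 2 - x j ^ 2| ^ (2 * k) : ℝ) : ℂ))

section Aux

variable {n : ℕ} {k μ₀ : ℝ}

/-- Each Gamma argument is nonvanishing on the half-plane. -/
lemma factor_ne_zero (hk : 0 ≤ k) (hμ₀ : μ₀ = k * (n - 1)) {α : ℂ}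
    (hα : μ₀ < α.re) (j : Fin n) : α - (k : ℂ) * (j : ℕ) ≠ 0 := by
  intro hzero
  have hre : (α - (k : ℂ) * (j : ℕ)).re = α.re - k * (j : ℕ) := by
    simp [Complex.sub_re, Complex.mul_re]
  rw [hzero] at hre
  have hj : (j : ℝ) ≤ (n : ℝ) - 1 := by
    have := j.is_lt
    have : (j : ℝ) ≤ (n : ℝ) - 1 := by
      have h1 : ((j : ℕ) : ℝ) + 1 ≤ (n : ℝ) := by exact_mod_cast j.is_lt
      linarith
    exact this
  have hkj : k * (j : ℕ) ≤ μ₀ := by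
    rw [hμ₀]; exact mul_le_mul_of_nonneg_left hj hk
  simp only [Complex.zero_re] at hre
  linarith

/-- The product appearing in the statement equals `∏ j, (α - k j)`. -/
lemma prod_shift_eq (hμ₀ : μ₀ = k * (n - 1)) (α : ℂ) :
    (∏ j : Fin n, (α - (μ₀ : ℂ) + (k : ℂ) * (j : ℕ)))
      = ∏ j : Fin n, (α - (k : ℂ) * (j : ℕ)) := by
  refine Fintype.prod_equiv Fin.revPerm _ _ fun j => ?_
  have hj1 : (j : ℕ) + 1 ≤ n := j.is_lt
  have hval : ((Fin.revPerm j : Fin n) : ℕ) = n - ((j : ℕ) + 1) := rfl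
  rw [hval]
  have hcast : ((n - ((j : ℕ) + 1) : ℕ) : ℂ) = (n : ℂ) - ((j : ℕ) + 1) := by
    push_cast [Nat.cast_sub hj1]; ring
  rw [hcast, hμ₀]
  push_cast
  ring

/-- Functional equation for `GammaN`. -/
lemma gammaN_step (hk : 0 ≤ k) (hμ₀ : μ₀ = k * (n - 1)) {α : ℂ} (hα : μ₀ < α.re) :
    GammaN n k (α + 1) = (∏ j : Fin n, (α - (k : ℂ) * (j : ℕ))) * GammaN n k α := by
  unfold GammaN
  have hprod : (∏ j : Fin n, Complex.Gamma (α + 1 - (k : ℂ) * (j : ℕ)))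
      = ∏ j : Fin n, ((α - (k : ℂ) * (j : ℕ)) * Complex.Gamma (α - (k : ℂ) * (j : ℕ))) := by
    refine Finset.prod_congr rfl fun j _ => ?_
    have heq : α + 1 - (k : ℂ) * (j : ℕ) = (α - (k : ℂ) * (j : ℕ)) + 1 := by ring
    rw [heq, Complex.Gamma_add_one _ (factor_ne_zero hk hμ₀ hα j)]
  rw [hprod, Finset.prod_mul_distrib]
  ring

/-- Shifting the zeta integral. -/
lemma zeta_step (hμ₀ : μ₀ = k * (n - 1)) {α : ℂ} (hα : μ₀ < α.re)
    (f h : SchwartzMap (Fin n → ℝ) ℂ)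
    (hh : ∀ x : Fin n → ℝ, h x = ((∏ i, x i ^ 2 : ℝ) : ℂ) * f x) :
    zetaIntegral n k μ₀ h α = zetaIntegral n k μ₀ f (α + 1) := by
  unfold zetaIntegral
  refine integral_congr_ae (Filter.Eventually.of_forall fun x => ?_)
  dsimp only
  rw [hh x]
  have hexp : 2 * (α + 1) - 2 * (μ₀ : ℂ) - 1 = (2 * α - 2 * (μ₀ : ℂ) - 1) + 2 := by ring
  have hne : (2 * α - 2 * (μ₀ : ℂ) - 1) + 2 ≠ 0 := by
    intro hzero
    have : ((2 * α - 2 * (μ₀ : ℂ) - 1) + 2).re = 2 * α.re - 2 * μ₀ + 1 := by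
      simp [Complex.sub_re, Complex.mul_re]; ring
    rw [hzero] at this
    simp only [Complex.zero_re] at this
    linarith
  have key : ((∏ i, x i ^ 2 : ℝ) : ℂ) * (∏ i, ((|x i| : ℝ) : ℂ) ^ (2 * α - 2 * (μ₀ : ℂ) - 1))
      = ∏ i, ((|x i| : ℝ) : ℂ) ^ (2 * (α + 1) - 2 * (μ₀ : ℂ) - 1) := by
    rw [hexp]
    push_cast
    rw [← Finset.prod_mul_distrib]
    refine Finset.prod_congr rfl fun i _ => ?_
    rcases eq_or_ne (x i) 0 with hx | hx
    · rw [hx]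
      simp [Complex.zero_cpow hne]
    · have habs : ((|x i| : ℝ) : ℂ) ≠ 0 := by
        simp [abs_eq_zero, hx]
      rw [Complex.cpow_add _ _ habs]
      have h2 : ((|x i| : ℝ) : ℂ) ^ (2 : ℂ) = ((x i : ℂ)) ^ (2 : ℕ) := by
        rw [show ((2 : ℂ)) = ((2 : ℕ) : ℂ) by norm_num, Complex.cpow_natCast]
        norm_cast
        rw [← abs_pow, abs_of_nonneg (sq_nonneg _)]
      rw [h2]
      ring
  calc ((∏ i, x i ^ 2 : ℝ) : ℂ) * f x *
        ((∏ i, ((|x i| : ℝ) : ℂ) ^ (2 * α - 2 * (μ₀ : ℂ) - 1)) *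
          ((∏ i : Fin n, ∏ j ∈ Finset.Ioi i, |x i ^ 2 - x j ^ 2| ^ (2 * k) : ℝ) : ℂ))
      = f x * ((((∏ i, x i ^ 2 : ℝ) : ℂ) *
          (∏ i, ((|x i| : ℝ) : ℂ) ^ (2 * α - 2 * (μ₀ : ℂ) - 1))) *
          ((∏ i : Fin n, ∏ j ∈ Finset.Ioi i, |x i ^ 2 - x j ^ 2| ^ (2 * k) : ℝ) : ℂ)) := by
        ring
    _ = _ := by rw [key]

end Aux

/-- in terms of the entire extensions `F_f` of `α ↦ 𝒵(f;α)/Γ_n(α)`, if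
`h(x) = (x₁²⋯xₙ²) f(x)` then `F_h(α) = b(α-μ₀) F_f(α+1)` for all `α ∈ ℂ`, with
`b(z) = ∏_{j=1}^n (z + k(j-1))`; i.e. `Δ(x²)·ζ_α = b(α-μ₀) ζ_{α+1}`. -/
theorem zeta_distribution_mul_delta_sq
    (n : ℕ) (hn : 1 ≤ n) (k : ℝ) (hk : 0 ≤ k)
    (μ₀ : ℝ) (hμ₀ : μ₀ = k * (n - 1))
    (FF : SchwartzMap (Fin n → ℝ) ℂ → ℂ → ℂ)
    (hFF : ∀ f, Differentiable ℂ (FF f) ∧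
      ∀ α : ℂ, μ₀ < α.re → FF f α = zetaIntegral n k μ₀ f α / GammaN n k α)
    (f h : SchwartzMap (Fin n → ℝ) ℂ)
    (hh : ∀ x : Fin n → ℝ, h x = ((∏ i, x i ^ 2 : ℝ) : ℂ) * f x) :
    ∀ α : ℂ, FF h α
      = (∏ j : Fin n, (α - (μ₀ : ℂ) + (k : ℂ) * (j : ℕ))) * FF f (α + 1) := by
  set g₂ : ℂ → ℂ := fun α =>
    (∏ j : Fin n, (α - (μ₀ : ℂ) + (k : ℂ) * (j : ℕ))) * FF f (α + 1) with hg₂def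
  have hd1 : Differentiable ℂ (FF h) := (hFF h).1
  have hd2 : Differentiable ℂ g₂ := by
    refine Differentiable.mul ?_ ?_
    · exact Differentiable.fun_finsetProd fun j _ =>
        ((differentiable_id.sub_const _).add_const _ :
          Differentiable ℂ fun α : ℂ => α - (μ₀ : ℂ) + (k : ℂ) * (j : ℕ))
    · exact (hFF f).1.comp (differentiable_id.add_const 1)
  -- agreement on the half-plane `μ₀ < Re α`
  have hagree : ∀ α : ℂ, μ₀ < α.re → FF h α = g₂ α := by
    intro α hα
    have hα1 : μ₀ < (α + 1).re := by
      simp only [Complex.add_re, Complex.one_re]; linarith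
    have e1 : FF h α = zetaIntegral n k μ₀ h α / GammaN n k α := (hFF h).2 α hα
    have e2 : FF f (α + 1) = zetaIntegral n k μ₀ f (α + 1) / GammaN n k (α + 1) :=
      (hFF f).2 (α + 1) hα1
    have hQ : (∏ j : Fin n, (α - (k : ℂ) * (j : ℕ))) ≠ 0 :=
      Finset.prod_ne_zero_iff.mpr fun j _ => factor_ne_zero hk hμ₀ hα j
    rw [hg₂def]
    simp only
    rw [e1, e2, zeta_step hμ₀ hα f h hh, gammaN_step hk hμ₀ hα,
      prod_shift_eq hμ₀ α, mul_div_assoc', mul_div_mul_left _ _ hQ]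
  -- identity theorem
  have hfreq : ∃ᶠ z in nhdsWithin ((μ₀ : ℂ) + 2) {((μ₀ : ℂ) + 2)}ᶜ, FF h z = g₂ z := by
    have hev : ∀ᶠ z in nhds ((μ₀ : ℂ) + 2), FF h z = g₂ z := by
      have hopen : IsOpen {z : ℂ | μ₀ < z.re} := isOpen_lt continuous_const Complex.continuous_re
      have hmem : ((μ₀ : ℂ) + 2) ∈ {z : ℂ | μ₀ < z.re} := by
        simp [Complex.add_re]
      filter_upwards [hopen.mem_nhds hmem] with z hz using hagree z hz
    exact ((hev.filter_mono nhdsWithin_le_nhds).frequently)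
  have := AnalyticOnNhd.eq_of_frequently_eq
    (Complex.analyticOnNhd_univ_iff_differentiable.2 hd1)
    (Complex.analyticOnNhd_univ_iff_differentiable.2 hd2) hfreq
  intro α
  exact congrFun this α
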